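/- For a zero-field tree Ising model with root r and leaf set L, the configuration (x_r = 1, x_L = 1) achieves the maximum of |P(x_r | x_L) − P(x_r)| over all choices of x_r ∈ {−1,1} and x_L ∈ {−1,1}^L, assuming all edge parameters are positive. -/

import Mathlib

set_option maxHeartbeats 1000000

open scoped FinsetFamily

/-- Spin value of a Boolean configuration entry: `true ↦ +1`, `false ↦ −1`. -/
noncomputable def val (b : Bool) : ℝ := if b then 1 else -1

/-- Unnormalized Ising weight `∏_{edges {u,v}} exp(θ_{uv} x_u x_v)` of a configuration. -/
noncomputable def isingWeight {V : Type*} [Fintype V] [LinearOrder V]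
    (G : SimpleGraph V) [DecidableRel G.Adj] (θ : V → V → ℝ) (σ : V → Bool) : ℝ :=
  ∏ p ∈ Finset.univ.filter (fun p : V × V => p.1 < p.2 ∧ G.Adj p.1 p.2),
    Real.exp (θ p.1 p.2 * val (σ p.1) * val (σ p.2))

/-- Conditional probability `P(X_r = b | X_L = y|_L)` in the Ising model on `G`. -/
noncomputable def condRootProb {V : Type*} [Fintype V] [LinearOrder V]
    (G : SimpleGraph V) [DecidableRel G.Adj] (θ : V → V → ℝ)
    (r : V) (L : Finset V) (b : Bool) (y : V → Bool) : ℝ :=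
  (∑ σ : V → Bool, if (∀ v ∈ L, σ v = y v) ∧ σ r = b then isingWeight G θ σ else 0) /
    (∑ σ : V → Bool, if ∀ v ∈ L, σ v = y v then isingWeight G θ σ else 0)

/-- Marginal probability `P(X_r = b)` in the Ising model on `G`. -/
noncomputable def rootMarg {V : Type*} [Fintype V] [LinearOrder V]
    (G : SimpleGraph V) [DecidableRel G.Adj] (θ : V → V → ℝ) (r : V) (b : Bool) : ℝ :=
  (∑ σ : V → Bool, if σ r = b then isingWeight G θ σ else 0) /
    (∑ σ : V → Bool, isingWeight G θ σ)

/- ### Auxiliary lemmas -/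

lemma isingWeight_pos {V : Type*} [Fintype V] [LinearOrder V]
    (G : SimpleGraph V) [DecidableRel G.Adj] (θ : V → V → ℝ) (σ : V → Bool) :
    0 < isingWeight G θ σ :=
  Finset.prod_pos fun _ _ => Real.exp_pos _

/-- Flip invariance of the Ising weight. -/
lemma isingWeight_flip {V : Type*} [Fintype V] [LinearOrder V]
    (G : SimpleGraph V) [DecidableRel G.Adj] (θ : V → V → ℝ) (σ : V → Bool) :
    isingWeight G θ (fun v => !σ v) = isingWeight G θ σ := by
  unfold isingWeight
  refine Finset.prod_congr rfl fun p _ => ?_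
  cases h1 : σ p.1 <;> cases h2 : σ p.2 <;> simp [val, h1, h2]

/-- Per-edge supermodularity of the exponent. -/
lemma val_supermod (t : ℝ) (ht : 0 ≤ t) (a b c d : Bool) :
    t * val a * val c + t * val b * val d ≤
      t * val (a ⊓ b) * val (c ⊓ d) + t * val (a ⊔ b) * val (c ⊔ d) := by
  cases a <;> cases b <;> cases c <;> cases d <;> simp [val] <;> linarith

/-- Log-supermodularity of the Ising weight for nonnegative couplings. -/
lemma isingWeight_supermod {V : Type*} [Fintype V] [LinearOrder V]
    (G : SimpleGraph V) [DecidableRel G.Adj] (θ : V → V → ℝ)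
    (hθ : ∀ i j, G.Adj i j → 0 ≤ θ i j) (σ τ : V → Bool) :
    isingWeight G θ σ * isingWeight G θ τ ≤
      isingWeight G θ (σ ⊓ τ) * isingWeight G θ (σ ⊔ τ) := by
  unfold isingWeight
  rw [← Finset.prod_mul_distrib, ← Finset.prod_mul_distrib]
  refine Finset.prod_le_prod (fun _ _ => by positivity) fun p hp => ?_
  rw [← Real.exp_add, ← Real.exp_add, Real.exp_le_exp]
  have hθp : 0 ≤ θ p.1 p.2 := hθ _ _ (Finset.mem_filter.1 hp).2.2
  exact val_supermod _ hθp (σ p.1) (τ p.1) (σ p.2) (τ p.2)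

section Main

variable {V : Type*} [Fintype V] [DecidableEq V]

/-- The constrained partition sum, as a sum over a filtered Finset. -/
lemma sum_ite_eq_filter (w : (V → Bool) → ℝ) (P : (V → Bool) → Prop) [DecidablePred P] :
    (∑ σ : V → Bool, if P σ then w σ else 0) = ∑ σ ∈ Finset.univ.filter P, w σ :=
  (Finset.sum_filter _ _).symm

/-- Abstract core: for a positive, flip-invariant, log-supermodular weight `w`,
the conditional root probability deviation is maximized by the all-plus boundary. -/
lemma core_ineq (w : (V → Bool) → ℝ) (hw : ∀ σ, 0 < w σ)
    (hsup : ∀ σ τ, w σ * w τ ≤ w (σ ⊓ τ) * w (σ ⊔ τ))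
    (hflip : ∀ σ, w (fun v => !σ v) = w σ)
    (r : V) (L : Finset V) (hr : r ∉ L) (b : Bool) (y : V → Bool) :
    |(∑ σ : V → Bool, if (∀ v ∈ L, σ v = y v) ∧ σ r = b then w σ else 0) /
        (∑ σ : V → Bool, if ∀ v ∈ L, σ v = y v then w σ else 0) - 1 / 2| ≤
      |(∑ σ : V → Bool, if (∀ v ∈ L, σ v = true) ∧ σ r = true then w σ else 0) /
        (∑ σ : V → Bool, if ∀ v ∈ L, σ v = true then w σ else 0) - 1 / 2| := by
  classical
  -- notation
  set S : Bool → (V → Bool) → Finset (V → Bool) :=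
    fun b y => Finset.univ.filter (fun σ => (∀ v ∈ L, σ v = y v) ∧ σ r = b) with hS
  set N : Bool → (V → Bool) → ℝ := fun b y => ∑ σ ∈ S b y, w σ with hN
  have hmemS : ∀ b y σ, σ ∈ S b y ↔ (∀ v ∈ L, σ v = y v) ∧ σ r = b := by
    intro b y σ; simp [hS]
  -- each N is positive
  have hNpos : ∀ b y, 0 < N b y := by
    intro b y
    refine Finset.sum_pos (fun σ _ => hw σ) ⟨fun v => if v ∈ L then y v else b, ?_⟩
    rw [hmemS]
    exact ⟨fun v hv => by simp [hv], by simp [hr]⟩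
  -- flip symmetry : N b y = N (!b) (!y)
  have hNflip : ∀ b y, N b y = N (!b) (fun v => !y v) := by
    intro b y
    rw [hN]
    refine Finset.sum_nbij' (fun σ => fun v => !σ v) (fun σ => fun v => !σ v) ?_ ?_ ?_ ?_ ?_
    · intro σ hσ
      rw [hmemS] at hσ ⊢
      refine ⟨fun v hv => ?_, ?_⟩
      · show (!σ v) = !y v
        rw [hσ.1 v hv]
      · show (!σ r) = !b
        rw [hσ.2]
    · intro σ hσ
      rw [hmemS] at hσ ⊢
      refine ⟨fun v hv => ?_, ?_⟩
      · have h := hσ.1 v hv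
        show (!σ v) = y v
        rw [h, Bool.not_not]
      · have h := hσ.2
        show (!σ r) = b
        rw [h, Bool.not_not]
    · intro σ _; funext v; simp
    · intro σ _; funext v; simp
    · intro σ _; exact (hflip σ).symm
  -- Ahlswede–Daykin key inequality
  have hkey : ∀ y : V → Bool,
      N true y * N false (fun _ => true) ≤ N false y * N true (fun _ => true) := by
    intro y
    have had := four_functions_theorem w w w w (fun σ => (hw σ).le) (fun σ => (hw σ).le)
      (fun σ => (hw σ).le) (fun σ => (hw σ).le) hsup (S true y) (S false (fun _ => true))
    refine had.trans (mul_le_mul ?_ ?_ (Finset.sum_nonneg fun σ _ => (hw σ).le)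
      (Finset.sum_nonneg fun σ _ => (hw σ).le))
    · -- infs ⊆ S false y
      refine Finset.sum_le_sum_of_subset_of_nonneg ?_ (fun σ _ _ => (hw σ).le)
      intro σ hσ
      obtain ⟨a, ha, c, hc, rfl⟩ := Finset.mem_infs.1 hσ
      rw [hmemS] at ha hc ⊢
      constructor
      · intro v hv
        have h1 := ha.1 v hv; have h2 := hc.1 v hv
        show a v ⊓ c v = y v
        rw [h1, h2]; cases y v <;> rfl
      · show a r ⊓ c r = false
        rw [ha.2, hc.2]; rfl
    · -- sups ⊆ S true 1
      refine Finset.sum_le_sum_of_subset_of_nonneg ?_ (fun σ _ _ => (hw σ).le)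
      intro σ hσ
      obtain ⟨a, ha, c, hc, rfl⟩ := Finset.mem_sups.1 hσ
      rw [hmemS] at ha hc ⊢
      constructor
      · intro v hv
        have h1 := ha.1 v hv; have h2 := hc.1 v hv
        show a v ⊔ c v = true
        rw [h1, h2]; cases y v <;> rfl
      · show a r ⊔ c r = true
        rw [ha.2, hc.2]; rfl
  -- abbreviations
  set A := N true (fun _ => true) with hA
  set C := N false (fun _ => true) with hC
  set a := N true y with ha
  set c := N false y with hc
  have hCA : C ≤ A := by
    have h1 := hkey (fun v => !(true : Bool))
    have e1 : N true (fun v => !(true : Bool)) = C := by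
      rw [hNflip true (fun v => !(true : Bool))]; simp [hC]
    have e2 : N false (fun v => !(true : Bool)) = A := by
      rw [hNflip false (fun v => !(true : Bool))]; simp [hA]
    rw [e1, e2] at h1
    nlinarith [hNpos true (fun _ => (true : Bool)), hNpos false (fun _ => (true : Bool))]
  have h1 : a * C ≤ c * A := hkey y
  have h2 : c * C ≤ a * A := by
    have h := hkey (fun v => !y v)
    have e1 : N true (fun v => !y v) = c := by
      rw [hNflip true (fun v => !y v)]; simp [hc]
    have e2 : N false (fun v => !y v) = a := by
      rw [hNflip false (fun v => !y v)]; simp [ha]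
    rwa [e1, e2] at h
  have hapos : 0 < a := hNpos _ _
  have hcpos : 0 < c := hNpos _ _
  have hApos : 0 < A := hNpos _ _
  have hCpos : 0 < C := hNpos _ _
  -- rewrite numerators and denominators
  have hnum : ∀ b y,
      (∑ σ : V → Bool, if (∀ v ∈ L, σ v = y v) ∧ σ r = b then w σ else 0) = N b y := by
    intro b y
    rw [hN]
    exact (Finset.sum_filter (fun σ => (∀ v ∈ L, σ v = y v) ∧ σ r = b) w).symm
  have hden : ∀ y : V → Bool,
      (∑ σ : V → Bool, if ∀ v ∈ L, σ v = y v then w σ else 0) = N true y + N false y := by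
    intro y
    rw [← hnum true y, ← hnum false y, ← Finset.sum_add_distrib]
    refine Finset.sum_congr rfl fun σ _ => ?_
    by_cases h : ∀ v ∈ L, σ v = y v <;> cases hσr : σ r <;> simp [h, hσr]
  rw [hnum, hnum, hden, hden]
  -- final algebra
  have hACne : A + C ≠ 0 := by positivity
  have hacne : a + c ≠ 0 := by positivity
  have hrhs : A / (A + C) - 1 / 2 = (A - C) / (2 * (A + C)) := by
    field_simp
    ring
  have hrabs : |A / (A + C) - 1 / 2| = (A - C) / (2 * (A + C)) := by
    rw [hrhs]
    exact abs_of_nonneg (div_nonneg (sub_nonneg.2 hCA) (by positivity))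
  rw [hrabs]
  have hlhs : |N b y / (a + c) - 1 / 2| = |a - c| / (2 * (a + c)) := by
    cases b
    · have : N false y / (a + c) - 1 / 2 = (c - a) / (2 * (a + c)) := by
        rw [← hc]; field_simp; ring
      rw [this, abs_div, abs_of_nonneg (by positivity : (0:ℝ) ≤ 2 * (a + c)), abs_sub_comm]
    · have : N true y / (a + c) - 1 / 2 = (a - c) / (2 * (a + c)) := by
        rw [← ha]; field_simp; ring
      rw [this, abs_div, abs_of_nonneg (by positivity : (0:ℝ) ≤ 2 * (a + c))]
  rw [hlhs, div_le_div_iff₀ (by positivity) (by positivity)]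
  rcases abs_cases (a - c) with ⟨he, _⟩ | ⟨he, _⟩ <;> rw [he] <;> nlinarith

end Main

/-- For a zero-field tree Ising model with root `r`, leaf set `L`, and all positive edge
parameters, the configuration `(x_r = 1, x_L = 1)` maximizes `|P(x_r | x_L) − P(x_r)|` over
all `x_r ∈ {−1,1}` and `x_L ∈ {−1,1}^L`. -/
theorem stmt_8 {V : Type*} [Fintype V] [LinearOrder V]
    (G : SimpleGraph V) [DecidableRel G.Adj] (hT : G.IsTree)
    (r : V) (L : Finset V) (hL : ∀ v, v ∈ L ↔ v ≠ r ∧ G.degree v = 1)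
    (θ : V → V → ℝ) (hθ : ∀ i j, G.Adj i j → 0 < θ i j) :
    ∀ (b : Bool) (y : V → Bool),
      |condRootProb G θ r L b y - rootMarg G θ r b| ≤
        |condRootProb G θ r L true (fun _ => true) - rootMarg G θ r true| := by
  classical
  intro b y
  -- the marginal is 1/2
  have hmarg : ∀ b : Bool, rootMarg G θ r b = 1 / 2 := by
    intro b
    unfold rootMarg
    have hflipnum : (∑ σ : V → Bool, if σ r = b then isingWeight G θ σ else 0) =
        ∑ σ : V → Bool, if σ r = !b then isingWeight G θ σ else 0 := by
      refine Fintype.sum_equiv ⟨fun σ => fun v => !σ v, fun σ => fun v => !σ v,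
        fun σ => by funext v; simp, fun σ => by funext v; simp⟩ _ _ fun σ => ?_
      simp only [Equiv.coe_fn_mk]
      rw [isingWeight_flip]
      congr 1
      cases b <;> cases hσ : σ r <;> simp [hσ]
    have htot : (∑ σ : V → Bool, isingWeight G θ σ) =
        (∑ σ : V → Bool, if σ r = b then isingWeight G θ σ else 0) +
        (∑ σ : V → Bool, if σ r = !b then isingWeight G θ σ else 0) := by
      rw [← Finset.sum_add_distrib]
      refine Finset.sum_congr rfl fun σ _ => ?_
      cases b <;> cases hσ : σ r <;> simp [hσ]
    have hpos : 0 < ∑ σ : V → Bool, if σ r = b then isingWeight G θ σ else 0 := by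
      rw [sum_ite_eq_filter]
      refine Finset.sum_pos (fun σ _ => isingWeight_pos G θ σ) ⟨fun _ => b, by simp⟩
    rw [htot, ← hflipnum]
    field_simp
    ring
  rw [hmarg, hmarg]
  have hr : r ∉ L := fun h => ((hL r).1 h).1 rfl
  unfold condRootProb
  exact core_ineq (isingWeight G θ) (isingWeight_pos G θ)
    (isingWeight_supermod G θ fun i j h => (hθ i j h).le)
    (isingWeight_flip G θ) r L hr b y
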